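/- arXiv:1512.07586 — 3 statements merged into one kernel-verified Lean document; each statement's English description precedes it below -/
import Mathlib

section
/- If S is a generating set of a commutative monoid P and F is a face of P (a submonoid whose complement is an ideal), then S ∩ F generates F. In particular, every face of a finitely generated monoid is finitely generated. -/
/-- If `S` generates a commutative monoid `P` and `F` is a face of `P`
(a submonoid such that `p + q ∈ F` implies `p ∈ F` and `q ∈ F`), then
`S ∩ F` generates `F`; in particular every face of a finitely generated
monoid is finitely generated. -/
theorem stmt0 {P : Type*} [AddCommMonoid P] (S : Set P)
    (hS : AddSubmonoid.closure S = ⊤) (F : AddSubmonoid P)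
    (hF : ∀ p q : P, p + q ∈ F → p ∈ F ∧ q ∈ F) :
    AddSubmonoid.closure (S ∩ (F : Set P)) = F ∧ (S.Finite → F.FG) := by
  have key : AddSubmonoid.closure (S ∩ (F : Set P)) = F := by
    apply le_antisymm
    · exact AddSubmonoid.closure_le.mpr (Set.inter_subset_right)
    · intro p hp
      have hpS : p ∈ AddSubmonoid.closure S := by rw [hS]; trivial
      revert hp
      refine AddSubmonoid.closure_induction
        (motive := fun x _ => x ∈ F → x ∈ AddSubmonoid.closure (S ∩ (F : Set P)))
        (fun x hx hxF => AddSubmonoid.subset_closure ⟨hx, hxF⟩)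
        (fun _ => AddSubmonoid.zero_mem _)
        (fun x y _ _ hx hy hxy => AddSubmonoid.add_mem _
          (hx (hF x y hxy).1) (hy (hF x y hxy).2)) hpS
  refine ⟨key, fun hfin => ?_⟩
  exact ⟨(hfin.inter_of_left (F : Set P)).toFinset, by rw [Set.Finite.coe_toFinset]; exact key⟩
end

section
/- For a finitely generated commutative monoid P, the set of faces of P is finite. -/
/-- For a finitely generated commutative monoid `P`, the set of faces of `P`
(submonoids `F` such that `p + q ∈ F` implies `p ∈ F` and `q ∈ F`) is finite. -/
theorem stmt1 {P : Type*} [AddCommMonoid P] [AddMonoid.FG P] :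
    {F : AddSubmonoid P | ∀ p q : P, p + q ∈ F → p ∈ F ∧ q ∈ F}.Finite := by
  obtain ⟨S, hS⟩ := (AddMonoid.fg_def.mp ‹_› : (⊤ : AddSubmonoid P).FG)
  -- key: a face is determined by its intersection with S
  have key : ∀ F ∈ {F : AddSubmonoid P | ∀ p q : P, p + q ∈ F → p ∈ F ∧ q ∈ F},
      F = AddSubmonoid.closure ((S : Set P) ∩ F) := by
    intro F hF
    apply le_antisymm
    · intro x hx
      have hx' : x ∈ AddSubmonoid.closure (S : Set P) := by
        rw [hS]; trivial
      revert hx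
      refine AddSubmonoid.closure_induction (fun s hs hsF =>
        AddSubmonoid.subset_closure ⟨hs, hsF⟩) (fun _ => AddSubmonoid.zero_mem _)
        (fun a b _ _ ha hb hab => ?_) hx'
      obtain ⟨h1, h2⟩ := hF a b hab
      exact AddSubmonoid.add_mem _ (ha h1) (hb h2)
    · rw [AddSubmonoid.closure_le]
      exact fun x hx => hx.2
  have hfin : {T : Set P | T ⊆ (S : Set P)}.Finite := (S.finite_toSet).finite_subsets
  apply Set.Finite.of_finite_image (f := fun F : AddSubmonoid P => (S : Set P) ∩ F)
  · exact hfin.subset (by rintro _ ⟨F, _, rfl⟩; exact Set.inter_subset_left)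
  · intro F hF G hG h
    rw [key F hF, key G hG]; simp only at h; rw [h]
end

section
/- Let f : N → N' be a homomorphism of finitely generated abelian groups with torsion-free kernel, and let F ≤ N and F' ≤ N' be subgroups such that f restricts to a bijection F → F'. Then the induced map N/F → N'/F' is injective on torsion subgroups. -/
/-- Let `f : N → N'` be a homomorphism of finitely generated abelian groups with
torsion-free kernel, and let `F ≤ N`, `F' ≤ N'` be subgroups such that `f`
restricts to a bijection `F → F'`.  Then the induced map `N/F → N'/F'` is
injective on torsion elements. -/
theorem stmt5 {N N' : Type*} [AddCommGroup N] [AddGroup.FG N]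
    [AddCommGroup N'] [AddGroup.FG N'] (f : N →+ N')
    (hker : ∀ x : N, f x = 0 → IsOfFinAddOrder x → x = 0)
    (F : AddSubgroup N) (F' : AddSubgroup N')
    (hmap : AddSubgroup.map f F = F') (hinj : Set.InjOn f (F : Set N))
    (hle : F ≤ AddSubgroup.comap f F') :
    ∀ x : N ⧸ F, IsOfFinAddOrder x →
      QuotientAddGroup.map F F' f hle x = 0 → x = 0 := by
  intro x hx h0
  obtain ⟨n, rfl⟩ := QuotientAddGroup.mk_surjective x
  have hfn : f n ∈ F' := by
    rwa [QuotientAddGroup.map_mk, QuotientAddGroup.eq_zero_iff] at h0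
  rw [← hmap] at hfn
  obtain ⟨m, hmF, hfm⟩ := hfn
  obtain ⟨k, hk, hkx⟩ := isOfFinAddOrder_iff_nsmul_eq_zero.mp hx
  have hkn : k • n ∈ F := by
    rwa [← QuotientAddGroup.mk_nsmul, QuotientAddGroup.eq_zero_iff] at hkx
  have h1 : k • n - k • m ∈ F := F.sub_mem hkn (F.nsmul_mem hmF k)
  have h2 : f (k • n - k • m) = f 0 := by
    simp [map_nsmul, hfm]
  have h3 : k • n - k • m = 0 := hinj h1 F.zero_mem h2
  have hfin : IsOfFinAddOrder (n - m) :=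
    isOfFinAddOrder_iff_nsmul_eq_zero.mpr ⟨k, hk, by rw [smul_sub]; exact h3⟩
  have hnm : n - m = 0 := hker _ (by simp [hfm]) hfin
  have : n = m := sub_eq_zero.mp hnm
  rw [QuotientAddGroup.eq_zero_iff, this]
  exact hmF
end
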